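/- Frobenius reciprocity holds between ind and res: for all basis elements, \langle ind(a_\alpha \otimes a_\beta), a_\lambda \rangle = \langle a_\alpha \otimes a_\beta, res(a_\lambda) \rangle, where \langle,\rangle is the pairing making the a_\lambda an orthonormal basis of K (and the induced tensor-product pairing on K \otimes K). -/

import Mathlib

/-- A weight: a word in the two-letter alphabet `{•, ∘}` (encoded as `Bool`,
with `true = •` and `false = ∘`). -/
abbrev Word : Type := List Bool

/-- The Grothendieck group `K`: the free `ℤ`-module on the set of weights,
with basis `a_λ = Finsupp.single λ 1`. -/
abbrev K : Type := Word →₀ ℤ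

/-- The model of `K ⊗ K`: the free `ℤ`-module on pairs of weights, with
`a_λ ⊗ a_μ = Finsupp.single (λ, μ) 1`. -/
abbrev K2 : Type := Word × Word →₀ ℤ

/-- `res` on a basis element: `res(a_λ) = ∑_{i=0}^n a_{λ[1,i]} ⊗ a_{λ(i,n]}
+ ∑_{i=1}^n a_{λ[1,i)} ⊗ a_{λ(i,n]}` where `n = ℓ(λ)`. -/
noncomputable def resWord (w : Word) : K2 :=
  (∑ i ∈ Finset.range (w.length + 1), Finsupp.single (w.take i, w.drop i) 1)
    + ∑ i ∈ Finset.range w.length, Finsupp.single (w.take i, w.drop (i + 1)) 1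

/-- The restriction comultiplication `res : K → K ⊗ K`. -/
noncomputable def res : K →ₗ[ℤ] K2 :=
  Finsupp.lift K2 ℤ Word resWord

/-- `ind` on basis elements: `ind(a_α ⊗ a_β) = a_{α•β} + a_{α∘β} + a_{αβ}`. -/
noncomputable def indWord (α β : Word) : K :=
  Finsupp.single (α ++ (true :: β)) 1 + Finsupp.single (α ++ (false :: β)) 1
    + Finsupp.single (α ++ β) 1

/-- The induction product `ind : K ⊗ K → K`. -/
noncomputable def ind : K2 →ₗ[ℤ] K :=
  Finsupp.lift K ℤ (Word × Word) fun p => indWord p.1 p.2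

/-- The elementary tensor `x ⊗ y ∈ K ⊗ K` of `x, y ∈ K`. -/
noncomputable def tens (x y : K) : K2 :=
  x.sum fun a ca => y.sum fun b cb => Finsupp.single (a, b) (ca * cb)

/-- The pairing on `K` making the basis `a_λ` orthonormal. -/
noncomputable def pairK (x y : K) : ℤ := x.sum fun w c => c * y w

/-- The induced tensor-product pairing on `K ⊗ K`, making the `a_λ ⊗ a_μ` orthonormal. -/
noncomputable def pairK2 (x y : K2) : ℤ := x.sum fun w c => c * y w


lemma sum1_eq (α β lam : Word) :
    (∑ i ∈ Finset.range (lam.length + 1),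
      (Finsupp.single (lam.take i, lam.drop i) (1:ℤ)) (α, β))
      = if lam = α ++ β then 1 else 0 := by
  have h : ∀ i ∈ Finset.range (lam.length + 1),
      (Finsupp.single (lam.take i, lam.drop i) (1:ℤ)) (α, β)
        = if i = α.length ∧ lam = α ++ β then 1 else 0 := by
    intro i hi
    rw [Finset.mem_range, Nat.lt_succ_iff] at hi
    rw [Finsupp.single_apply]
    congr 1
    simp only [Prod.mk.injEq, eq_iff_iff]
    constructor
    · rintro ⟨h1, h2⟩
      have hlen : α.length = i := by
        rw [← h1, List.length_take]; omega
      exact ⟨hlen.symm, by rw [← h1, ← h2, List.take_append_drop]⟩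
    · rintro ⟨hi', hl⟩
      subst hi' hl
      exact ⟨List.take_left (l₁ := α) (l₂ := β), List.drop_left (l₁ := α) (l₂ := β)⟩
  rw [Finset.sum_congr rfl h]
  by_cases hl : lam = α ++ β
  · simp only [hl, and_true]
    rw [Finset.sum_ite_eq']
    simp [List.length_append]
  · simp [hl]

lemma sum2_eq (α β lam : Word) :
    (∑ i ∈ Finset.range lam.length,
      (Finsupp.single (lam.take i, lam.drop (i + 1)) (1:ℤ)) (α, β))
      = (if lam = α ++ true :: β then 1 else 0)
        + (if lam = α ++ false :: β then 1 else 0) := by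
  have h : ∀ i ∈ Finset.range lam.length,
      (Finsupp.single (lam.take i, lam.drop (i + 1)) (1:ℤ)) (α, β)
        = if i = α.length ∧ (lam = α ++ true :: β ∨ lam = α ++ false :: β)
            then 1 else 0 := by
    intro i hi
    rw [Finset.mem_range] at hi
    rw [Finsupp.single_apply]
    congr 1
    simp only [Prod.mk.injEq, eq_iff_iff]
    constructor
    · rintro ⟨h1, h2⟩
      have hlen : α.length = i := by
        rw [← h1, List.length_take]; omega
      have hdrop : lam.drop i = lam[i] :: lam.drop (i + 1) :=
        List.drop_eq_getElem_cons hi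
      have hlam : lam = α ++ lam[i] :: β := by
        rw [← h1, ← h2]
        conv_lhs => rw [← List.take_append_drop i lam]
        rw [hdrop]
      refine ⟨hlen.symm, ?_⟩
      cases hb : lam[i] <;> [right; left] <;> rw [hlam, hb]
    · rintro ⟨hi', (hl | hl)⟩ <;> subst hi' hl <;>
        refine ⟨List.take_left (l₁ := α), ?_⟩ <;>
        · rw [← List.drop_drop (i := 1) (j := α.length), List.drop_left]
          rfl
  rw [Finset.sum_congr rfl h]
  by_cases hD : lam = α ++ true :: β ∨ lam = α ++ false :: β
  · have hne : ¬(lam = α ++ true :: β ∧ lam = α ++ false :: β) := by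
      rintro ⟨h1, h2⟩
      rw [h1] at h2
      simpa using List.append_cancel_left h2
    have hlt : α.length < lam.length := by
      rcases hD with h | h <;> subst h <;> simp [List.length_append]
    simp only [hD, and_true]
    rw [Finset.sum_ite_eq' (Finset.range lam.length)]
    simp only [Finset.mem_range, hlt, if_true]
    rcases hD with h | h
    · simp [h, fun h2 => hne ⟨h, h2⟩]
    · simp [h, fun h1 => hne ⟨h1, h⟩]
  · simp only [hD, and_false, if_false, Finset.sum_const_zero]
    push_neg at hD
    simp [hD.1, hD.2]

lemma indWord_eq_resWord (α β lam : Word) : indWord α β lam = resWord lam (α, β) := by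
  rw [indWord, resWord]
  rw [Finsupp.add_apply, Finsupp.add_apply, Finsupp.add_apply,
    Finsupp.finset_sum_apply, Finsupp.finset_sum_apply, sum1_eq, sum2_eq]
  simp only [Finsupp.single_apply]
  have e : ∀ w : Word, (if w = lam then (1:ℤ) else 0) = if lam = w then 1 else 0 :=
    fun w => by simp [eq_comm]
  rw [e, e, e]
  ring

lemma ind_single (α β : Word) : ind (Finsupp.single (α, β) 1) = indWord α β := by
  simp [ind, Finsupp.lift_apply, Finsupp.sum_single_index]

lemma res_single (lam : Word) : res (Finsupp.single lam 1) = resWord lam := by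
  simp [res, Finsupp.lift_apply, Finsupp.sum_single_index]

lemma pairK_single_right (x : K) (lam : Word) :
    pairK x (Finsupp.single lam 1) = x lam := by
  unfold pairK
  simp only [Finsupp.single_apply, mul_ite, mul_one, mul_zero]
  rw [Finsupp.sum_ite_eq]
  split <;> simp_all [Finsupp.mem_support_iff]

lemma pairK2_single_left (p : Word × Word) (y : K2) :
    pairK2 (Finsupp.single p 1) y = y p := by
  unfold pairK2
  rw [Finsupp.sum_single_index] <;> simp

/-- Frobenius reciprocity between `ind` and `res`:
`⟨ind(a_α ⊗ a_β), a_λ⟩ = ⟨a_α ⊗ a_β, res(a_λ)⟩`. -/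
theorem frobenius_reciprocity : ∀ α β lam : Word,
    pairK (ind (Finsupp.single (α, β) 1)) (Finsupp.single lam 1)
      = pairK2 (Finsupp.single (α, β) 1) (res (Finsupp.single lam 1)) := by
  intro α β lam
  rw [ind_single, res_single, pairK_single_right, pairK2_single_left,
    indWord_eq_resWord]
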